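/- Let m = -1, and let λ, b, c be real constants. Define B(x) = x(b - λ·arcsinh(x))·√(x²+1) + c(x²+1). Then B satisfies B''(x) - 1/(x²+1)² · (x(x²+1)B'(x) + 2B(x)) + 2λ = 0 for all x ∈ ℝ. -/

import Mathlib

open Real

/-- The function `B` from (2.9) for `m = -1`. -/
noncomputable def Bneg (lam b c : ℝ) (x : ℝ) : ℝ :=
  x * (b - lam * Real.arsinh x) * Real.sqrt (x ^ 2 + 1) + c * (x ^ 2 + 1)

private lemma sq1_pos (x : ℝ) : (0:ℝ) < x ^ 2 + 1 := by positivity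

private lemma s_pos (x : ℝ) : 0 < Real.sqrt (x ^ 2 + 1) := Real.sqrt_pos.2 (sq1_pos x)

private lemma s_sq (x : ℝ) : Real.sqrt (x ^ 2 + 1) ^ 2 = x ^ 2 + 1 :=
  Real.sq_sqrt (sq1_pos x).le

private lemma hasDerivAt_s (x : ℝ) :
    HasDerivAt (fun y : ℝ => Real.sqrt (y ^ 2 + 1)) (x / Real.sqrt (x ^ 2 + 1)) x := by
  have h : HasDerivAt (fun y : ℝ => y ^ 2 + 1) (2 * x) x := by
    simpa using ((hasDerivAt_pow 2 x).add_const 1)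
  have := (Real.hasDerivAt_sqrt (sq1_pos x).ne').comp x h
  refine HasDerivAt.congr_deriv this ?_
  field_simp

private lemma hasDerivAt_arsinh' (x : ℝ) :
    HasDerivAt Real.arsinh (Real.sqrt (x ^ 2 + 1))⁻¹ x := by
  simpa [add_comm] using Real.hasDerivAt_arsinh x

noncomputable def Bneg1 (lam b c : ℝ) (x : ℝ) : ℝ :=
  (b - lam * Real.arsinh x) * (2 * x ^ 2 + 1) / Real.sqrt (x ^ 2 + 1) + (2 * c - lam) * x

private lemma hasDerivAt_Bneg (lam b c : ℝ) (x : ℝ) :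
    HasDerivAt (Bneg lam b c) (Bneg1 lam b c x) x := by
  have hs := s_pos x
  have h1 : HasDerivAt (fun y : ℝ => y * (b - lam * Real.arsinh y))
      (1 * (b - lam * Real.arsinh x) + x * (-(lam * (Real.sqrt (x ^ 2 + 1))⁻¹))) x := by
    exact (hasDerivAt_id x).mul (((hasDerivAt_arsinh' x).const_mul lam).const_sub b)
  have h2 := h1.mul (hasDerivAt_s x)
  have h3 : HasDerivAt (fun y : ℝ => c * (y ^ 2 + 1)) (c * (2 * x)) x := by
    simpa using ((hasDerivAt_pow 2 x).add_const 1).const_mul c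
  have h := h2.add h3
  refine HasDerivAt.congr_deriv h ?_
  unfold Bneg1
  have hsq := s_sq x
  field_simp
  linear_combination (b - (Real.arsinh x) * lam) * hsq

noncomputable def Bneg2 (lam b c : ℝ) (x : ℝ) : ℝ :=
  -lam * (2 * x ^ 2 + 1) / (x ^ 2 + 1)
    + (b - lam * Real.arsinh x) * (2 * x ^ 3 + 3 * x) / Real.sqrt (x ^ 2 + 1) ^ 3
    + (2 * c - lam)

private lemma hasDerivAt_Bneg1 (lam b c : ℝ) (x : ℝ) :
    HasDerivAt (Bneg1 lam b c) (Bneg2 lam b c x) x := by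
  have hs := s_pos x
  have hsq := s_sq x
  have h1 : HasDerivAt (fun y : ℝ => (b - lam * Real.arsinh y) * (2 * y ^ 2 + 1))
      ((-(lam * (Real.sqrt (x ^ 2 + 1))⁻¹)) * (2 * x ^ 2 + 1)
        + (b - lam * Real.arsinh x) * (2 * (2 * x))) x := by
    have ha := ((hasDerivAt_arsinh' x).const_mul lam).const_sub b
    have hb : HasDerivAt (fun y : ℝ => 2 * y ^ 2 + 1) (2 * (2 * x)) x := by
      simpa using (((hasDerivAt_pow 2 x).const_mul 2).add_const 1)
    exact ha.mul hb
  have h2 := h1.div (hasDerivAt_s x) hs.ne'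
  have h3 : HasDerivAt (fun y : ℝ => (2 * c - lam) * y) (2 * c - lam) x := by
    simpa using (hasDerivAt_id x).const_mul (2 * c - lam)
  have h := h2.add h3
  refine HasDerivAt.congr_deriv h ?_
  unfold Bneg2
  field_simp
  linear_combination (2 * x ^ 2 * (Real.sqrt (x ^ 2 + 1)) * lam + (Real.sqrt (x ^ 2 + 1)) * lam + 4 * x ^ 3 * b - 4 * x ^ 3 * (Real.arsinh x) * lam + 4 * x * b - 4 * x * (Real.arsinh x) * lam) * hsq

/-- For `m = -1`, `B` satisfies `B'' - 1/(x²+1)² (x(x²+1)B' + 2B) + 2λ = 0`. -/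
theorem Bneg_ode (lam b c : ℝ) :
    ∀ x : ℝ,
      deriv (deriv (Bneg lam b c)) x
        - 1 / (x ^ 2 + 1) ^ 2 *
            (x * (x ^ 2 + 1) * deriv (Bneg lam b c) x + 2 * Bneg lam b c x)
        + 2 * lam = 0 := by
  intro x
  have e1 : deriv (Bneg lam b c) = Bneg1 lam b c :=
    funext fun y => (hasDerivAt_Bneg lam b c y).deriv
  rw [e1, (hasDerivAt_Bneg1 lam b c x).deriv]
  have hs := s_pos x
  have hsq := s_sq x
  have hp := sq1_pos x
  unfold Bneg Bneg1 Bneg2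
  set s := Real.sqrt (x ^ 2 + 1) with hsdef
  field_simp
  linear_combination (-2 * x * s ^ 2 * b + 2 * x * s ^ 2 * (Real.arsinh x) * lam - 2 * x ^ 5 * b + 2 * x ^ 5 * (Real.arsinh x) * lam - 5 * x ^ 3 * b + 5 * x ^ 3 * (Real.arsinh x) * lam - 3 * x * b + 3 * x * (Real.arsinh x) * lam) * hsq
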